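/- arXiv:2509.02302 — 2 statements merged into one kernel-verified Lean document; each statement's English description precedes it below -/
import Mathlib

section
/- In the online lead-time quotation problem OLTQ with patience limit ℓ, changing the number of arrivals at a single period m from e_m to e'_m (with e_m, e'_m ∈ {0,…,ℓ}) changes the cumulative reward of any fixed action sequence by at most ℓ·|e_m - e'_m|: Val(OLTQ^I, e_m∘e_{m+1:n}, a_{m:n}) - Val(OLTQ^I, e'_m∘e_{m+1:n}, a_{m:n}) ≥ -ℓ·min(|e_m - e'_m|, ℓ). -/
/-- Per-period reward of the online lead-time quotation (OLTQ) problem with patience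
limit `ℓ` (see `Rolt` in the paper, Eq. (5)); `a s i = none` means an infinite quote. -/
def Rolt (ℓ : ℕ) (e : ℕ → ℕ) (a : ℕ → ℕ → Option ℕ) (t : ℕ) : ℕ :=
  ∑ s ∈ Finset.Icc 1 t, ∑ i ∈ Finset.Icc 1 (e s),
    if a s i = some t ∧
        (∀ j ∈ Finset.Ico 1 s, ∀ k ∈ Finset.Icc 1 (e j), a j k ≠ some t) ∧
        (∀ k ∈ Finset.Ico 1 i, a s k ≠ some t)
    then s + ℓ - t else 0

/-- The condition selecting the first request quoted exactly `t`. -/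
def OltCond (e : ℕ → ℕ) (a : ℕ → ℕ → Option ℕ) (t s i : ℕ) : Prop :=
  a s i = some t ∧
    (∀ j ∈ Finset.Ico 1 s, ∀ k ∈ Finset.Icc 1 (e j), a j k ≠ some t) ∧
    (∀ k ∈ Finset.Ico 1 i, a s k ≠ some t)

instance OltCond.dec (e : ℕ → ℕ) (a : ℕ → ℕ → Option ℕ) (t s i : ℕ) :
    Decidable (OltCond e a t s i) := by unfold OltCond; infer_instance

def OltTerm (ℓ : ℕ) (e : ℕ → ℕ) (a : ℕ → ℕ → Option ℕ) (t s i : ℕ) : ℕ :=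
  if OltCond e a t s i then s + ℓ - t else 0

lemma Rolt_eq_sum (ℓ : ℕ) (e : ℕ → ℕ) (a : ℕ → ℕ → Option ℕ) (t : ℕ) :
    Rolt ℓ e a t = ∑ s ∈ Finset.Icc 1 t, ∑ i ∈ Finset.Icc 1 (e s), OltTerm ℓ e a t s i := by
  simp only [Rolt, OltTerm, OltCond]

lemma OltTerm_eq_zero (ℓ : ℕ) (e : ℕ → ℕ) (a : ℕ → ℕ → Option ℕ) (t s i : ℕ)
    (h : ¬ OltCond e a t s i) : OltTerm ℓ e a t s i = 0 := by
  unfold OltTerm; rw [if_neg h]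

/-- At most one pair `(s,i)` satisfies the condition, so the per-period reward is ≤ ℓ. -/
lemma rolt_le (ℓ : ℕ) (e : ℕ → ℕ) (a : ℕ → ℕ → Option ℕ) (t : ℕ) :
    Rolt ℓ e a t ≤ ℓ := by
  rw [Rolt_eq_sum]
  by_cases hex : ∃ s ∈ Finset.Icc 1 t, ∃ i ∈ Finset.Icc 1 (e s), OltCond e a t s i
  · obtain ⟨s₀, hs₀, i₀, hi₀, hc⟩ := hex
    have hs₀' := Finset.mem_Icc.mp hs₀
    have hi₀' := Finset.mem_Icc.mp hi₀
    -- every other pair fails the condition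
    have huniq : ∀ s i, 1 ≤ s → 1 ≤ i → i ≤ e s → ¬(s = s₀ ∧ i = i₀) →
        ¬ OltCond e a t s i := by
      intro s i hs hi hie hne hc'
      obtain ⟨ha, hJ, hK⟩ := hc'
      obtain ⟨ha₀, hJ₀, hK₀⟩ := hc
      rcases lt_trichotomy s s₀ with h | h | h
      · exact hJ₀ s (Finset.mem_Ico.mpr ⟨hs, h⟩) i (Finset.mem_Icc.mpr ⟨hi, hie⟩) ha
      · subst h
        rcases lt_trichotomy i i₀ with h' | h' | h'
        · exact hK₀ i (Finset.mem_Ico.mpr ⟨hi, h'⟩) ha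
        · exact hne ⟨rfl, h'⟩
        · exact hK i₀ (Finset.mem_Ico.mpr ⟨hi₀'.1, h'⟩) ha₀
      · exact hJ s₀ (Finset.mem_Ico.mpr ⟨hs₀'.1, h⟩) i₀ (Finset.mem_Icc.mpr hi₀') ha₀
    have hsum : (∑ s ∈ Finset.Icc 1 t, ∑ i ∈ Finset.Icc 1 (e s), OltTerm ℓ e a t s i)
        = OltTerm ℓ e a t s₀ i₀ := by
      rw [Finset.sum_eq_single_of_mem s₀ hs₀]
      · rw [Finset.sum_eq_single_of_mem i₀ hi₀]
        intro i hi hne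
        have hi' := Finset.mem_Icc.mp hi
        exact OltTerm_eq_zero _ _ _ _ _ _
          (huniq s₀ i hs₀'.1 hi'.1 hi'.2 (fun hh => hne hh.2))
      · intro s hs hne
        refine Finset.sum_eq_zero fun i hi => ?_
        have hs' := Finset.mem_Icc.mp hs
        have hi' := Finset.mem_Icc.mp hi
        exact OltTerm_eq_zero _ _ _ _ _ _
          (huniq s i hs'.1 hi'.1 hi'.2 (fun hh => hne hh.1))
    rw [hsum]
    unfold OltTerm
    split <;> omega
  · push_neg at hex
    rw [Finset.sum_eq_zero]
    · exact Nat.zero_le _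
    intro s hs
    exact Finset.sum_eq_zero fun i hi => OltTerm_eq_zero _ _ _ _ _ _ (hex s hs i hi)

/-- Extending the range of a universal quantifier over `Icc 1 b` vs `Icc 1 b'`
when the property holds on the symmetric difference. -/
lemma icc_ext {p : ℕ → Prop} {b b' : ℕ}
    (H : ∀ i, min b b' < i → i ≤ max b b' → p i) :
    (∀ k ∈ Finset.Icc 1 b, p k) ↔ (∀ k ∈ Finset.Icc 1 b', p k) := by
  constructor
  · intro h k hk
    have hk' := Finset.mem_Icc.mp hk
    rcases le_or_gt k b with h1 | h1
    · exact h k (Finset.mem_Icc.mpr ⟨hk'.1, h1⟩)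
    · exact H k (by omega) (by omega)
  · intro h k hk
    have hk' := Finset.mem_Icc.mp hk
    rcases le_or_gt k b' with h1 | h1
    · exact h k (Finset.mem_Icc.mpr ⟨hk'.1, h1⟩)
    · exact H k (by omega) (by omega)

/-- If no request among the changed ones at period `m` is quoted to `t`,
the period-`t` rewards coincide. -/
lemma rolt_congr (ℓ : ℕ) (e e' : ℕ → ℕ) (a : ℕ → ℕ → Option ℕ) (m t : ℕ)
    (hee : ∀ s, s ≠ m → e s = e' s)
    (H : ∀ i, min (e m) (e' m) < i → i ≤ max (e m) (e' m) → a m i ≠ some t) :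
    Rolt ℓ e a t = Rolt ℓ e' a t := by
  have hcond : ∀ s i, OltCond e a t s i ↔ OltCond e' a t s i := by
    intro s i
    unfold OltCond
    refine and_congr Iff.rfl (and_congr ?_ Iff.rfl)
    refine forall₂_congr fun j hj => ?_
    by_cases hjm : j = m
    · subst hjm
      exact icc_ext H
    · rw [hee j hjm]
  have hterm : ∀ s i, OltTerm ℓ e a t s i = OltTerm ℓ e' a t s i := by
    intro s i
    unfold OltTerm
    exact if_congr (hcond s i) rfl rfl
  rw [Rolt_eq_sum, Rolt_eq_sum]
  refine Finset.sum_congr rfl fun s _ => ?_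
  by_cases hsm : s = m
  · rw [hsm]
    -- both inner sums equal the sum over `Icc 1 (max ...)`
    have hext : ∀ (E : ℕ → ℕ) (b : ℕ), min (e m) (e' m) ≤ b → b ≤ max (e m) (e' m) →
        ∑ i ∈ Finset.Icc 1 b, OltTerm ℓ E a t m i
          = ∑ i ∈ Finset.Icc 1 (max (e m) (e' m)), OltTerm ℓ E a t m i := by
      intro E b hb1 hb2
      refine Finset.sum_subset (Finset.Icc_subset_Icc_right hb2) ?_
      intro i hi hib
      have hi' := Finset.mem_Icc.mp hi
      have hbi : b < i := by
        by_contra hle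
        exact hib (Finset.mem_Icc.mpr ⟨hi'.1, by omega⟩)
      refine OltTerm_eq_zero _ _ _ _ _ _ ?_
      intro hc
      exact H i (by omega) hi'.2 hc.1
    rw [hext e (e m) (min_le_left _ _) (le_max_left _ _),
        hext e' (e' m) (min_le_right _ _) (le_max_right _ _)]
    exact Finset.sum_congr rfl fun i _ => hterm m i
  · rw [hee s hsm]
    exact Finset.sum_congr rfl fun i _ => hterm s i

/-- OLTQ is (1, ℓ)-Lipschitz: changing the number of arrivals at a single period `m`
from `e m` to `e' m` (both in {0,…,ℓ}) changes the cumulative reward of any fixed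
action sequence over the window `m, …, n` by at most `ℓ·min(|e_m - e'_m|, ℓ)`. -/
theorem stmt_9 (ℓ m n : ℕ) (hℓ : 1 ≤ ℓ) (hm : 1 ≤ m)
    (e e' : ℕ → ℕ) (a : ℕ → ℕ → Option ℕ)
    (he : ∀ s, e s ≤ ℓ) (he' : ∀ s, e' s ≤ ℓ)
    (hrange : ∀ s i x, a s i = some x → s ≤ x ∧ x < s + ℓ)
    (hee : ∀ s, s ≠ m → e s = e' s) :
    ((∑ t ∈ Finset.Icc m n, Rolt ℓ e a t : ℕ) : ℝ)
        - ((∑ t ∈ Finset.Icc m n, Rolt ℓ e' a t : ℕ) : ℝ)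
      ≥ -((ℓ : ℝ) * min |(e m : ℝ) - (e' m : ℝ)| (ℓ : ℝ)) := by
  classical
  set D : Finset ℕ := (Finset.Icc m n).filter (fun t => Rolt ℓ e a t ≠ Rolt ℓ e' a t) with hD
  -- any differing period is the quote of some changed request
  have hwit : ∀ t ∈ D, ∃ i, min (e m) (e' m) < i ∧ i ≤ max (e m) (e' m) ∧ a m i = some t := by
    intro t ht
    have hne := (Finset.mem_filter.mp ht).2
    by_contra hno
    push_neg at hno
    exact hne (rolt_congr ℓ e e' a m t hee (fun i h1 h2 => hno i h1 h2))
  -- D has at most |e m - e' m| elements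
  have hcard1 : D.card ≤ max (e m) (e' m) - min (e m) (e' m) := by
    have hsub : D ⊆ (Finset.Ioc (min (e m) (e' m)) (max (e m) (e' m))).image
        (fun i => (a m i).getD 0) := by
      intro t ht
      obtain ⟨i, h1, h2, h3⟩ := hwit t ht
      exact Finset.mem_image.mpr ⟨i, Finset.mem_Ioc.mpr ⟨h1, h2⟩, by rw [h3]; rfl⟩
    calc D.card ≤ _ := Finset.card_le_card hsub
      _ ≤ (Finset.Ioc (min (e m) (e' m)) (max (e m) (e' m))).card := Finset.card_image_le
      _ = max (e m) (e' m) - min (e m) (e' m) := Nat.card_Ioc _ _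
  -- D has at most ℓ elements
  have hcard2 : D.card ≤ ℓ := by
    have hsub : D ⊆ Finset.Ico m (m + ℓ) := by
      intro t ht
      obtain ⟨i, _, _, h3⟩ := hwit t ht
      have := hrange m i t h3
      exact Finset.mem_Ico.mpr ⟨this.1, this.2⟩
    calc D.card ≤ (Finset.Ico m (m + ℓ)).card := Finset.card_le_card hsub
      _ = ℓ := by rw [Nat.card_Ico]; omega
  -- per-period comparison
  have hmain : (∑ t ∈ Finset.Icc m n, Rolt ℓ e' a t)
      ≤ (∑ t ∈ Finset.Icc m n, Rolt ℓ e a t) + ℓ * D.card := by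
    have h1 : (∑ t ∈ Finset.Icc m n, Rolt ℓ e' a t)
        ≤ ∑ t ∈ Finset.Icc m n, (Rolt ℓ e a t +
            if Rolt ℓ e a t ≠ Rolt ℓ e' a t then ℓ else 0) := by
      refine Finset.sum_le_sum fun t _ => ?_
      by_cases h : Rolt ℓ e a t = Rolt ℓ e' a t
      · simp [h]
      · rw [if_pos h]
        have := rolt_le ℓ e' a t
        omega
    have h2 : ∑ t ∈ Finset.Icc m n, (Rolt ℓ e a t +
          if Rolt ℓ e a t ≠ Rolt ℓ e' a t then ℓ else 0)
        = (∑ t ∈ Finset.Icc m n, Rolt ℓ e a t) + ℓ * D.card := by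
      rw [Finset.sum_add_distrib, ← Finset.sum_filter, ← hD, Finset.sum_const,
        smul_eq_mul, mul_comm]
    omega
  -- conclude over ℝ
  have hcard : D.card ≤ min (max (e m) (e' m) - min (e m) (e' m)) ℓ :=
    le_min hcard1 hcard2
  have habs : ((max (e m) (e' m) - min (e m) (e' m) : ℕ) : ℝ)
      = |(e m : ℝ) - (e' m : ℝ)| := by
    rcases le_total (e m) (e' m) with h | h
    · rw [max_eq_right h, min_eq_left h, Nat.cast_sub h, abs_sub_comm,
        abs_of_nonneg (by simpa using (Nat.cast_le (α := ℝ)).mpr h)]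
    · rw [max_eq_left h, min_eq_right h, Nat.cast_sub h,
        abs_of_nonneg (by simpa using (Nat.cast_le (α := ℝ)).mpr h)]
  have hkey : (ℓ : ℝ) * D.card ≤ (ℓ : ℝ) * min |(e m : ℝ) - (e' m : ℝ)| (ℓ : ℝ) := by
    refine mul_le_mul_of_nonneg_left ?_ (by positivity)
    calc (D.card : ℝ) ≤ ((min (max (e m) (e' m) - min (e m) (e' m)) ℓ : ℕ) : ℝ) :=
          Nat.cast_le.mpr hcard
      _ = min |(e m : ℝ) - (e' m : ℝ)| (ℓ : ℝ) := by
          rw [Nat.cast_min, habs]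
  have hmain' : ((∑ t ∈ Finset.Icc m n, Rolt ℓ e' a t : ℕ) : ℝ)
      ≤ ((∑ t ∈ Finset.Icc m n, Rolt ℓ e a t : ℕ) : ℝ) + (ℓ : ℝ) * D.card := by
    exact_mod_cast hmain
  linarith
end

section
/- In the online reusable resource allocation problem ORRA_n, changing the request at a single period m from e_m to e'_m while keeping the action sequence fixed changes the total number of fulfilled requests by at most 1: Val(ORRA_n^I, e_m∘e_{m+1:M}, a_{m:M}) ≥ Val(ORRA_n^I, e'_m∘e_{m+1:M}, a_{m:M}) - 1. Hence ORRA_n is (1,1)-strongly-Lipschitz under the discrete metric d(e, e') = I(e ≠ e'). -/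
/-- Next-availability times of the `n` reusable resources after `t` periods. -/
def Wt (n d : ℕ) (e : ℕ → Fin n → Bool) (a : ℕ → Option (Fin n)) :
    ℕ → Fin n → ℕ
  | 0 => fun _ => 1
  | t + 1 => fun i =>
      if a (t + 1) = some i ∧ Wt n d e a t i ≤ t + 1 ∧ e (t + 1) i = true
      then t + 1 + d else Wt n d e a t i

/-- Reward of ORRA_n at period `t`: `1` iff the request is successfully fulfilled. -/
def Rorra (n d : ℕ) (e : ℕ → Fin n → Bool) (a : ℕ → Option (Fin n)) (t : ℕ) : ℕ :=
  match a t with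
  | none => 0
  | some i => if Wt n d e a t i = t + d then 1 else 0

lemma Wt_le (n d : ℕ) (hd : 1 ≤ d) (e : ℕ → Fin n → Bool) (a : ℕ → Option (Fin n)) :
    ∀ t i, Wt n d e a t i ≤ t + d := by
  intro t
  induction t with
  | zero => intro i; simp only [Wt]; omega
  | succ t ih =>
    intro i
    simp only [Wt]
    split
    · omega
    · exact le_trans (ih i) (by omega)

lemma Rorra_succ (n d : ℕ) (hd : 1 ≤ d) (e : ℕ → Fin n → Bool) (a : ℕ → Option (Fin n))
    (s : ℕ) (i : Fin n) (ha : a (s+1) = some i) :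
    Rorra n d e a (s+1)
      = if (Wt n d e a s i ≤ s + 1 ∧ e (s+1) i = true) then 1 else 0 := by
  unfold Rorra
  rw [ha]
  simp only [Wt, ha, true_and]
  by_cases h : Wt n d e a s i ≤ s + 1 ∧ e (s+1) i = true
  · rw [if_pos h, if_pos h, if_pos rfl]
  · rw [if_neg h, if_neg h, if_neg]
    have := Wt_le n d hd e a s i
    omega

lemma Wt_succ_of_act (n d : ℕ) (e : ℕ → Fin n → Bool) (a : ℕ → Option (Fin n))
    (s : ℕ) (i : Fin n) (ha : a (s+1) = some i) :
    Wt n d e a (s+1) i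
      = if (Wt n d e a s i ≤ s + 1 ∧ e (s+1) i = true) then s + 1 + d
        else Wt n d e a s i := by
  simp only [Wt, ha, true_and]

lemma Wt_succ_of_not_act (n d : ℕ) (e : ℕ → Fin n → Bool) (a : ℕ → Option (Fin n))
    (s : ℕ) (i : Fin n) (ha : a (s+1) ≠ some i) :
    Wt n d e a (s+1) i = Wt n d e a s i := by
  simp only [Wt]
  rw [if_neg (fun h => ha h.1)]

lemma W_eq_lt (n d m : ℕ) (e e' : ℕ → Fin n → Bool) (a : ℕ → Option (Fin n))
    (hee : ∀ s, s ≠ m → e s = e' s) :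
    ∀ t, t < m → ∀ i, Wt n d e a t i = Wt n d e' a t i := by
  intro t
  induction t with
  | zero => intros; rfl
  | succ t ih =>
    intro ht i
    have h1 : e (t+1) = e' (t+1) := hee (t+1) (by omega)
    simp only [Wt, ih (by omega) i, h1]

lemma W_eq_none (n d m : ℕ) (e e' : ℕ → Fin n → Bool) (a : ℕ → Option (Fin n))
    (hee : ∀ s, s ≠ m → e s = e' s) (ha : a m = none) :
    ∀ t i, Wt n d e a t i = Wt n d e' a t i := by
  intro t
  induction t with
  | zero => intros; rfl
  | succ t ih =>
    intro i
    by_cases hm : t + 1 = m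
    · subst hm
      simp only [Wt, ha, ih i]
      simp
    · have h1 : e (t+1) = e' (t+1) := hee (t+1) hm
      simp only [Wt, ih i, h1]

lemma W_eq_ne (n d m : ℕ) (e e' : ℕ → Fin n → Bool) (a : ℕ → Option (Fin n))
    (hee : ∀ s, s ≠ m → e s = e' s) (p : Fin n) (ha : a m = some p) :
    ∀ t i, i ≠ p → Wt n d e a t i = Wt n d e' a t i := by
  intro t
  induction t with
  | zero => intros; rfl
  | succ t ih =>
    intro i hip
    by_cases hm : t + 1 = m
    · subst hm
      have hne : ¬ (a (t+1) = some i) := by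
        rw [ha]; simp only [Option.some.injEq]; exact fun h => hip h.symm
      simp only [Wt, ih i hip]
      rw [if_neg (fun h => hne h.1), if_neg (fun h => hne h.1)]
    · have h1 : e (t+1) = e' (t+1) := hee (t+1) hm
      simp only [Wt, ih i hip, h1]

lemma main_inv (n d : ℕ) (hd : 1 ≤ d) (m : ℕ) (hm : 1 ≤ m)
    (e e' : ℕ → Fin n → Bool) (a : ℕ → Option (Fin n))
    (hee : ∀ s, s ≠ m → e s = e' s) (p : Fin n) (ha : a m = some p) :
    ∀ N, m ≤ N →
      (∑ t ∈ Finset.Icc m N, Rorra n d e' a t)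
          ≤ (∑ t ∈ Finset.Icc m N, Rorra n d e a t) + 1 ∧
      ((∑ t ∈ Finset.Icc m N, Rorra n d e' a t)
          = (∑ t ∈ Finset.Icc m N, Rorra n d e a t) + 1 →
        Wt n d e a N p ≤ Wt n d e' a N p) := by
  intro N hN
  induction N, hN using Nat.le_induction with
  | base =>
    obtain ⟨s, rfl⟩ := Nat.exists_eq_succ_of_ne_zero (by omega : m ≠ 0)
    simp only [Finset.Icc_self, Finset.sum_singleton]
    have hw : Wt n d e a s p = Wt n d e' a s p :=
      W_eq_lt n d (s+1) e e' a hee s (by omega) p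
    rw [Rorra_succ n d hd e a s p ha, Rorra_succ n d hd e' a s p ha,
      Wt_succ_of_act n d e a s p ha, Wt_succ_of_act n d e' a s p ha]
    by_cases hc : Wt n d e a s p ≤ s + 1 ∧ e (s+1) p = true
    · rw [if_pos hc, if_pos hc]
      by_cases hc' : Wt n d e' a s p ≤ s + 1 ∧ e' (s+1) p = true
      · rw [if_pos hc', if_pos hc']; omega
      · rw [if_neg hc', if_neg hc']; omega
    · rw [if_neg hc, if_neg hc]
      by_cases hc' : Wt n d e' a s p ≤ s + 1 ∧ e' (s+1) p = true
      · rw [if_pos hc', if_pos hc']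
        refine ⟨by omega, fun _ => ?_⟩
        have := Wt_le n d hd e a s p
        omega
      · rw [if_neg hc', if_neg hc']; omega
  | succ N hN ih =>
    rw [Finset.sum_Icc_succ_top (by omega : m ≤ N + 1),
        Finset.sum_Icc_succ_top (by omega : m ≤ N + 1)]
    rcases hA : a (N+1) with _ | i
    · -- no action: rewards 0, state unchanged
      have h0 : Rorra n d e a (N+1) = 0 := by unfold Rorra; rw [hA]
      have h0' : Rorra n d e' a (N+1) = 0 := by unfold Rorra; rw [hA]
      have hw : Wt n d e a (N+1) p = Wt n d e a N p :=
        Wt_succ_of_not_act n d e a N p (by rw [hA]; simp)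
      have hw' : Wt n d e' a (N+1) p = Wt n d e' a N p :=
        Wt_succ_of_not_act n d e' a N p (by rw [hA]; simp)
      rw [h0, h0', hw, hw']
      exact ⟨by omega, fun h => ih.2 (by omega)⟩
    · by_cases hip : i = p
      · subst hip
        -- acting on the distinguished resource
        have hem : (N+1) ≠ m := by omega
        have hE : e (N+1) = e' (N+1) := hee (N+1) hem
        rw [Rorra_succ n d hd e a N i hA, Rorra_succ n d hd e' a N i hA,
          Wt_succ_of_act n d e a N i hA, Wt_succ_of_act n d e' a N i hA, ← hE]
        by_cases hc : Wt n d e a N i ≤ N + 1 ∧ e (N+1) i = true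
        · rw [if_pos hc, if_pos hc]
          by_cases hc' : Wt n d e' a N i ≤ N + 1 ∧ e (N+1) i = true
          · rw [if_pos hc', if_pos hc']
            exact ⟨by omega, fun _ => le_refl _⟩
          · rw [if_neg hc', if_neg hc']
            have := ih.1
            constructor
            · omega
            · intro h
              exfalso; omega
        · rw [if_neg hc, if_neg hc]
          by_cases hc' : Wt n d e' a N i ≤ N + 1 ∧ e (N+1) i = true
          · rw [if_pos hc', if_pos hc']
            -- unprimed busy, primed fires: so W e N > W e' N, deficit must be ≤ 0
            have hwgt : ¬ (Wt n d e a N i ≤ Wt n d e' a N i) := by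
              intro hle
              exact hc ⟨le_trans hle hc'.1, hc'.2⟩
            have hne : (∑ t ∈ Finset.Icc m N, Rorra n d e' a t)
                ≠ (∑ t ∈ Finset.Icc m N, Rorra n d e a t) + 1 :=
              fun h => hwgt (ih.2 h)
            have := ih.1
            refine ⟨by omega, fun _ => ?_⟩
            have := Wt_le n d hd e a N i
            omega
          · rw [if_neg hc', if_neg hc']
            exact ⟨by omega, fun h => ih.2 (by omega)⟩
      · -- acting on a different resource: rewards coincide
        have hwi : Wt n d e a N i = Wt n d e' a N i :=
          W_eq_ne n d m e e' a hee p ha N i hip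
        have hE : e (N+1) = e' (N+1) := hee (N+1) (by omega)
        have hr : Rorra n d e a (N+1) = Rorra n d e' a (N+1) := by
          rw [Rorra_succ n d hd e a N i hA, Rorra_succ n d hd e' a N i hA, hwi, hE]
        have hw : Wt n d e a (N+1) p = Wt n d e a N p :=
          Wt_succ_of_not_act n d e a N p
            (by rw [hA]; simp only [Ne, Option.some.injEq]; exact hip)
        have hw' : Wt n d e' a (N+1) p = Wt n d e' a N p :=
          Wt_succ_of_not_act n d e' a N p
            (by rw [hA]; simp only [Ne, Option.some.injEq]; exact hip)
        rw [hr, hw, hw']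
        exact ⟨by omega, fun h => ih.2 (by omega)⟩

/-- ORRA_n is (1,1)-strongly-Lipschitz (under the discrete metric on requests):
changing the request at a single period `m` while keeping the action sequence fixed
changes the total number of fulfilled requests by at most 1. -/
theorem stmt_14 (n d : ℕ) (hd : 1 ≤ d) (m M : ℕ) (hm : 1 ≤ m)
    (e e' : ℕ → Fin n → Bool) (a : ℕ → Option (Fin n))
    (hee : ∀ s, s ≠ m → e s = e' s) :
    ((∑ t ∈ Finset.Icc m M, Rorra n d e a t : ℕ) : ℝ)
      ≥ ((∑ t ∈ Finset.Icc m M, Rorra n d e' a t : ℕ) : ℝ) - 1 := by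
  have key : (∑ t ∈ Finset.Icc m M, Rorra n d e' a t)
      ≤ (∑ t ∈ Finset.Icc m M, Rorra n d e a t) + 1 := by
    rcases le_or_gt m M with hM | hM
    · rcases hA : a m with _ | p
      · have : ∀ t, Rorra n d e a t = Rorra n d e' a t := by
          intro t
          unfold Rorra
          rcases h : a t with _ | i
          · rfl
          · show (if Wt n d e a t i = t + d then 1 else 0)
                = (if Wt n d e' a t i = t + d then 1 else 0)
            rw [W_eq_none n d m e e' a hee hA t i]
        simp only [this]
        omega
      · exact (main_inv n d hd m hm e e' a hee p hA M hM).1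
    · rw [Finset.Icc_eq_empty (by omega)]
      simp
  have : ((∑ t ∈ Finset.Icc m M, Rorra n d e' a t : ℕ) : ℝ)
      ≤ ((∑ t ∈ Finset.Icc m M, Rorra n d e a t : ℕ) : ℝ) + 1 := by
    exact_mod_cast key
  linarith
end
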